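/- Let λ ∈ ℂ with λ ∉ {0} ∪ {1/n : n ≥ 1} and write a(λ) = Re(1/λ). Then for all N ≥ 1, ∏_{n=1}^{N} |1 − 1/(nλ)| ≤ exp(1/|λ| + 1/|λ|²) · N^{−a(λ)}. -/

import Mathlib

lemma stmt9_sq_sum (N : ℕ) (hN : 1 ≤ N) :
    ∑ n ∈ Finset.Icc 1 N, 1 / (n : ℝ) ^ 2 ≤ 2 - 1 / (N : ℝ) := by
  induction N with
  | zero => omega
  | succ m ih =>
    rcases Nat.lt_or_ge 1 (m + 1) with h | h
    · have hm : 1 ≤ m := by omega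
      rw [Finset.sum_Icc_succ_top (by omega : 1 ≤ m + 1)]
      have h1 := ih hm
      have hm0 : (0 : ℝ) < m := by exact_mod_cast hm
      have hm1 : (0 : ℝ) < (m : ℝ) + 1 := by linarith
      have key : 1 / ((m : ℝ) + 1) ^ 2 ≤ 1 / (m : ℝ) - 1 / ((m : ℝ) + 1) := by
        rw [div_sub_div _ _ (ne_of_gt hm0) (ne_of_gt hm1)]
        rw [div_le_div_iff₀ (by positivity) (by positivity)]
        ring_nf
        nlinarith
      push_cast
      linarith
    · have : m = 0 := by omega
      subst this
      norm_num

theorem stmt9 (lam : ℂ) (h0 : lam ≠ 0)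
    (hn : ∀ n : ℕ, 1 ≤ n → lam ≠ 1 / (n : ℂ)) :
    ∀ N : ℕ, 1 ≤ N →
      ∏ n ∈ Finset.Icc 1 N, ‖1 - 1 / ((n : ℂ) * lam)‖ ≤
        Real.exp (1 / ‖lam‖ + 1 / (‖lam‖) ^ 2) *
          (N : ℝ) ^ (-(1 / lam).re) := by
  intro N hN
  set z : ℂ := 1 / lam with hz
  set a : ℝ := z.re with ha
  set r : ℝ := ‖z‖ with hrdef
  have hr : r = 1 / ‖lam‖ := by
    rw [hrdef, hz, norm_div, norm_one]
  have hr0 : 0 ≤ r := norm_nonneg _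
  have ha1 : a ≤ r := Complex.re_le_norm z
  have ha2 : -r ≤ a := by
    have := Complex.abs_re_le_norm z
    rw [abs_le] at this
    exact this.1
  -- pointwise bound
  have key : ∀ n ∈ Finset.Icc 1 N,
      ‖1 - 1 / ((n : ℂ) * lam)‖ ≤
        Real.exp (-a * (1 / (n : ℝ)) + r ^ 2 / 2 * (1 / (n : ℝ) ^ 2)) := by
    intro n hnmem
    have hn1 : 1 ≤ n := (Finset.mem_Icc.mp hnmem).1
    have hnR : (0 : ℝ) < (n : ℝ) := by exact_mod_cast hn1
    have hw : 1 / ((n : ℂ) * lam) = z / ((n : ℝ) : ℂ) := by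
      push_cast
      rw [hz]
      field_simp
    set w : ℂ := z / ((n : ℝ) : ℂ) with hwdef
    have hwre : w.re = a / (n : ℝ) := by
      rw [hwdef, Complex.div_ofReal_re]
    have hwabs : ‖w‖ = r / (n : ℝ) := by
      rw [hwdef, norm_div, Complex.norm_real, Real.norm_eq_abs, abs_of_pos hnR]
    rw [hw]
    have hsq : ‖1 - w‖ ^ 2 = 1 - 2 * w.re + ‖w‖ ^ 2 := by
      rw [Complex.sq_norm, Complex.sq_norm]
      simp [Complex.normSq_apply, Complex.sub_re, Complex.sub_im]
      ring
    have hle : ‖1 - w‖ ^ 2 ≤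
        Real.exp (-2 * w.re + ‖w‖ ^ 2) := by
      rw [hsq]
      have := Real.add_one_le_exp (-2 * w.re + ‖w‖ ^ 2)
      linarith
    have hexp : Real.exp (-2 * w.re + ‖w‖ ^ 2) =
        Real.exp (-w.re + ‖w‖ ^ 2 / 2) ^ 2 := by
      rw [← Real.exp_nat_mul]
      ring_nf
    rw [hexp] at hle
    have h1 : ‖1 - w‖ ≤ Real.exp (-w.re + ‖w‖ ^ 2 / 2) := by
      have hA : (0 : ℝ) ≤ ‖1 - w‖ := norm_nonneg _
      have hB : (0 : ℝ) < Real.exp (-w.re + ‖w‖ ^ 2 / 2) := Real.exp_pos _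
      nlinarith
    calc ‖1 - w‖ ≤ Real.exp (-w.re + ‖w‖ ^ 2 / 2) := h1
      _ = Real.exp (-a * (1 / (n : ℝ)) + r ^ 2 / 2 * (1 / (n : ℝ) ^ 2)) := by
          rw [hwre, hwabs]
          congr 1
          field_simp
  have step1 : ∏ n ∈ Finset.Icc 1 N, ‖1 - 1 / ((n : ℂ) * lam)‖ ≤
      ∏ n ∈ Finset.Icc 1 N,
        Real.exp (-a * (1 / (n : ℝ)) + r ^ 2 / 2 * (1 / (n : ℝ) ^ 2)) :=
    Finset.prod_le_prod (fun n _ => norm_nonneg _) key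
  rw [← Real.exp_sum] at step1
  set H : ℝ := ∑ n ∈ Finset.Icc 1 N, 1 / (n : ℝ) with hH
  set S : ℝ := ∑ n ∈ Finset.Icc 1 N, 1 / (n : ℝ) ^ 2 with hS
  have hsum : ∑ n ∈ Finset.Icc 1 N,
      (-a * (1 / (n : ℝ)) + r ^ 2 / 2 * (1 / (n : ℝ) ^ 2)) = -a * H + r ^ 2 / 2 * S := by
    rw [Finset.sum_add_distrib, ← Finset.mul_sum, ← Finset.mul_sum]
  rw [hsum] at step1
  -- harmonic bounds
  have hHharm : H = ((harmonic N : ℚ) : ℝ) := by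
    rw [hH, harmonic_eq_sum_Icc]
    push_cast
    simp [one_div]
  have hlogle : Real.log N ≤ H := by
    rw [hHharm]
    calc Real.log N ≤ Real.log (N + 1) := by
          apply Real.log_le_log (by exact_mod_cast Nat.pos_of_ne_zero (by omega))
          linarith
      _ ≤ _ := by exact_mod_cast log_add_one_le_harmonic N
  have hHle : H ≤ 1 + Real.log N := by
    rw [hHharm]
    exact_mod_cast harmonic_le_one_add_log N
  have hSle : S ≤ 2 := by
    have := stmt9_sq_sum N hN
    have hN0 : (0 : ℝ) < N := by exact_mod_cast hN
    have : 1 / (N : ℝ) > 0 := by positivity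
    linarith [stmt9_sq_sum N hN]
  have hS0 : 0 ≤ S := Finset.sum_nonneg fun n _ => by positivity
  -- bound the exponent
  have hexpbound : -a * H + r ^ 2 / 2 * S ≤ r + r ^ 2 + (-a) * Real.log N := by
    have h2 : r ^ 2 / 2 * S ≤ r ^ 2 := by nlinarith
    have h1 : -a * H ≤ r + (-a) * Real.log N := by
      rcases le_or_gt 0 a with hc | hc
      · nlinarith
      · nlinarith
    linarith
  have step2 : Real.exp (-a * H + r ^ 2 / 2 * S) ≤
      Real.exp (r + r ^ 2 + (-a) * Real.log N) := Real.exp_le_exp.mpr hexpbound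
  have hNpos : (0 : ℝ) < (N : ℝ) := by exact_mod_cast hN
  have hrpow : (N : ℝ) ^ (-(1 / lam).re) = Real.exp (Real.log N * (-a)) := by
    rw [Real.rpow_def_of_pos hNpos]
  have hfinal : Real.exp (r + r ^ 2 + (-a) * Real.log N) =
      Real.exp (1 / ‖lam‖ + 1 / (‖lam‖) ^ 2) *
        (N : ℝ) ^ (-(1 / lam).re) := by
    rw [hrpow, ← Real.exp_add]
    congr 1
    rw [hr]
    ring_nf
  linarith [step1, step2, hfinal ▸ step2]
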